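/- For every k ≥ 1, if G is the path graph P_{3k+1} on 3k+1 vertices and v is a pendant (end) vertex of G, then γst(G/v) = γst(G) − 1; equivalently, γst(P_{3k}) = γst(P_{3k+1}) − 1. In particular, the lower bound γst(G) − 1 ≤ γst(G/v) for pendant vertices is tight. -/

import Mathlib

/-- The degree of a vertex `x` in a graph `G`. -/
noncomputable def sdeg {V : Type*} (G : SimpleGraph V) (x : V) : ℕ :=
  (G.neighborSet x).ncard

/-- `D` is a strong dominating set of `G`: every vertex `x ∉ D` has a neighbor
`y ∈ D` with `deg x ≤ deg y`. -/
def IsStrongDominating {V : Type*} (G : SimpleGraph V) (D : Set V) : Prop :=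
  ∀ x ∉ D, ∃ y ∈ D, G.Adj x y ∧ sdeg G x ≤ sdeg G y

/-- The strong domination number of `G`. -/
noncomputable def sdn {V : Type*} (G : SimpleGraph V) : ℕ :=
  sInf {n | ∃ D : Set V, IsStrongDominating G D ∧ D.ncard = n}

/-- Vertex deletion `G - v`: the induced subgraph on the complement of `{v}`. -/
def delVtx {V : Type*} (G : SimpleGraph V) (v : V) : SimpleGraph {x : V // x ≠ v} where
  Adj a b := G.Adj a.1 b.1
  symm := ⟨fun a b h => G.adj_symm h⟩
  loopless := ⟨fun a h => G.irrefl h⟩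

/-- Vertex contraction `G / v`: delete `v` and put a clique on its open neighborhood. -/
def contractVtx {V : Type*} (G : SimpleGraph V) (v : V) : SimpleGraph {x : V // x ≠ v} where
  Adj a b := a ≠ b ∧ (G.Adj a.1 b.1 ∨ (G.Adj v a.1 ∧ G.Adj v b.1))
  symm := by
    constructor; rintro a b ⟨hab, h | ⟨ha, hb⟩⟩
    · exact ⟨hab.symm, Or.inl h.symm⟩
    · exact ⟨hab.symm, Or.inr ⟨hb, ha⟩⟩
  loopless := by constructor; rintro a ⟨h, -⟩; exact h rfl

/-- `G ⊙ v`: remove all edges between any pair of neighbors of `v`. -/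
def odotVtx {V : Type*} (G : SimpleGraph V) (v : V) : SimpleGraph V where
  Adj x y := G.Adj x y ∧ ¬(G.Adj v x ∧ G.Adj v y)
  symm := by
    constructor; rintro x y ⟨h, hn⟩
    exact ⟨h.symm, fun hc => hn ⟨hc.2, hc.1⟩⟩
  loopless := by constructor; rintro x ⟨h, -⟩; exact G.irrefl h

/-- Edge contraction `G / uv`: merge `v` into `u`. -/
def contractEdge {V : Type*} (G : SimpleGraph V) (u v : V) : SimpleGraph {x : V // x ≠ v} where
  Adj a b := a ≠ b ∧ (G.Adj a.1 b.1 ∨ (a.1 = u ∧ G.Adj v b.1) ∨ (b.1 = u ∧ G.Adj v a.1))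
  symm := by
    constructor; rintro a b ⟨hab, h | h | h⟩
    · exact ⟨hab.symm, Or.inl h.symm⟩
    · exact ⟨hab.symm, Or.inr (Or.inr h)⟩
    · exact ⟨hab.symm, Or.inr (Or.inl h)⟩
  loopless := by constructor; rintro a ⟨h, -⟩; exact h rfl

/-- The star `K_{1,n}` with center `none` and leaves `some i`. -/
def starG (n : ℕ) : SimpleGraph (Option (Fin n)) where
  Adj a b := (a = none ∧ b ≠ none) ∨ (a ≠ none ∧ b = none)
  symm := by
    constructor; rintro a b (⟨h1, h2⟩ | ⟨h1, h2⟩)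
    · exact Or.inr ⟨h2, h1⟩
    · exact Or.inl ⟨h2, h1⟩
  loopless := by
    constructor; rintro a (⟨h1, h2⟩ | ⟨h1, h2⟩)
    exacts [h2 h1, h1 h2]

/-- The path graph `P_n` on vertices `0, …, n-1`, consecutive integers adjacent. -/
def pathG (n : ℕ) : SimpleGraph (Fin n) where
  Adj i j := i.1 + 1 = j.1 ∨ j.1 + 1 = i.1
  symm := ⟨fun i j h => h.symm⟩
  loopless := by constructor; rintro i (h | h) <;> omega

lemma path_adj {n : ℕ} {i j : Fin n} : (pathG n).Adj i j ↔ (i.1 + 1 = j.1 ∨ j.1 + 1 = i.1) := Iff.rfl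

lemma sdeg_path_le (n : ℕ) (x : Fin n) : sdeg (pathG n) x ≤ 2 := by
  have hx := x.2
  classical
  set a : Fin n := if h : x.1 + 1 < n then ⟨x.1 + 1, h⟩ else x with ha
  set b : Fin n := if h : 0 < x.1 then ⟨x.1 - 1, by omega⟩ else x with hb
  have hsub : (pathG n).neighborSet x ⊆ {a, b} := by
    intro y hy
    rcases hy with h | h
    · left
      have h1 : x.1 + 1 < n := h ▸ y.2
      simp only [ha, dif_pos h1]
      apply Fin.ext
      simp only [Fin.val_mk]
      omega
    · right
      have h1 : 0 < x.1 := by omega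
      simp only [hb, dif_pos h1]
      apply Fin.ext
      simp only [Fin.val_mk]
      omega
  calc sdeg (pathG n) x ≤ ({a, b} : Set (Fin n)).ncard := Set.ncard_le_ncard hsub (Set.toFinite _)
    _ ≤ ({b} : Set (Fin n)).ncard + 1 := Set.ncard_insert_le a {b}
    _ ≤ 2 := by rw [Set.ncard_singleton]

lemma sdeg_path_interior {n : ℕ} (x : Fin n) (h1 : 0 < x.1) (h2 : x.1 + 1 < n) :
    sdeg (pathG n) x = 2 := by
  have : (pathG n).neighborSet x = {⟨x.1 - 1, by omega⟩, ⟨x.1 + 1, h2⟩} := by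
    ext y
    simp only [SimpleGraph.mem_neighborSet, path_adj, Set.mem_insert_iff,
      Set.mem_singleton_iff, Fin.ext_iff, Fin.val_mk]
    omega
  rw [sdeg, this, Set.ncard_pair (by simp only [ne_eq, Fin.mk.injEq]; omega)]

lemma sdeg_path_mk_interior {n m : ℕ} (h0 : 0 < m) (h1 : m + 1 < n) :
    sdeg (pathG n) ⟨m, by omega⟩ = 2 :=
  sdeg_path_interior ⟨m, by omega⟩ h0 h1

lemma sdeg_path_zero {n : ℕ} (hn : 2 ≤ n) :
    sdeg (pathG n) ⟨0, by omega⟩ = 1 := by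
  have : (pathG n).neighborSet ⟨0, by omega⟩ = {⟨1, by omega⟩} := by
    ext y
    simp only [SimpleGraph.mem_neighborSet, path_adj, Set.mem_singleton_iff, Fin.ext_iff,
      Fin.val_mk]
    omega
  rw [sdeg, this, Set.ncard_singleton]

lemma sdeg_path_last {n : ℕ} (hn : 2 ≤ n) :
    sdeg (pathG n) ⟨n - 1, by omega⟩ = 1 := by
  have : (pathG n).neighborSet ⟨n - 1, by omega⟩ = {⟨n - 2, by omega⟩} := by
    ext y
    have := y.2
    simp only [SimpleGraph.mem_neighborSet, path_adj, Set.mem_singleton_iff, Fin.ext_iff,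
      Fin.val_mk]
    omega
  rw [sdeg, this, Set.ncard_singleton]

open Finset in
lemma path_lower {n : ℕ} {D : Set (Fin n)} (hD : IsStrongDominating (pathG n) D) :
    n ≤ 3 * D.ncard := by
  classical
  set DF : Finset (Fin n) := (Set.toFinite D).toFinset with hDF
  set N : Fin n → Finset (Fin n) :=
    fun y => Finset.univ.filter (fun x => x = y ∨ (x.1 + 1 = y.1 ∨ y.1 + 1 = x.1)) with hN
  have hsub : (Finset.univ : Finset (Fin n)) ⊆ DF.biUnion N := by
    intro x _
    by_cases hx : x ∈ D
    · exact Finset.mem_biUnion.2 ⟨x, by simp [hDF]; exact hx, by simp [hN]⟩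
    · obtain ⟨y, hyD, hadj, -⟩ := hD x hx
      exact Finset.mem_biUnion.2 ⟨y, by simp [hDF]; exact hyD, by simp [hN, path_adj.1 hadj]⟩
  have hcard : ∀ y : Fin n, (N y).card ≤ 3 := by
    intro y
    have himg : (N y).image Fin.val ⊆ {y.1, y.1 - 1, y.1 + 1} := by
      intro m hm
      simp only [Finset.mem_image] at hm
      obtain ⟨x, hx, rfl⟩ := hm
      simp only [hN, Finset.mem_filter, Fin.ext_iff] at hx
      simp only [Finset.mem_insert, Finset.mem_singleton]
      omega
    calc (N y).card = ((N y).image Fin.val).card :=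
          (Finset.card_image_of_injective _ Fin.val_injective).symm
      _ ≤ ({y.1, y.1 - 1, y.1 + 1} : Finset ℕ).card := Finset.card_le_card himg
      _ ≤ 3 := by
          apply le_trans (Finset.card_insert_le _ _)
          have := Finset.card_insert_le (y.1 - 1) ({y.1 + 1} : Finset ℕ)
          have h1 : ({y.1 + 1} : Finset ℕ).card = 1 := Finset.card_singleton _
          omega
  have := Finset.card_le_card hsub
  rw [Finset.card_univ, Fintype.card_fin] at this
  calc n ≤ (DF.biUnion N).card := this
    _ ≤ ∑ y ∈ DF, (N y).card := Finset.card_biUnion_le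
    _ ≤ ∑ _y ∈ DF, 3 := Finset.sum_le_sum (fun y _ => hcard y)
    _ = 3 * D.ncard := by
        rw [Finset.sum_const, smul_eq_mul, Set.ncard_eq_toFinset_card D (Set.toFinite D)]
        ring

lemma sdn_eq {V : Type*} (G : SimpleGraph V) (m : ℕ)
    (hmem : ∃ D : Set V, IsStrongDominating G D ∧ D.ncard = m)
    (hlow : ∀ D : Set V, IsStrongDominating G D → m ≤ D.ncard) : sdn G = m := by
  refine le_antisymm (Nat.sInf_le hmem) (le_csInf ⟨m, hmem⟩ ?_)
  rintro n ⟨D, hD, rfl⟩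
  exact hlow D hD

lemma sdn_path_3k {k : ℕ} (hk : 1 ≤ k) : sdn (pathG (3 * k)) = k := by
  classical
  apply sdn_eq
  · set f : Fin k → Fin (3 * k) := fun i => ⟨3 * i.1 + 1, by have := i.2; omega⟩ with hf
    have hinj : Function.Injective f := by
      intro i j h
      simp only [hf, Fin.mk.injEq] at h
      exact Fin.ext (by omega)
    set D : Set (Fin (3 * k)) := ↑((Finset.univ : Finset (Fin k)).image f) with hD
    have hmemD : ∀ x : Fin (3 * k), x ∈ D ↔ x.1 % 3 = 1 := by
      intro x
      simp only [hD, Finset.coe_image, Finset.coe_univ, Set.image_univ, Set.mem_range, hf,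
        Fin.ext_iff, Fin.val_mk]
      constructor
      · rintro ⟨i, hi⟩; omega
      · intro h
        have hx := x.2
        exact ⟨⟨x.1 / 3, by omega⟩, by simp; omega⟩
    refine ⟨D, ?_, ?_⟩
    · intro x hx
      rw [hmemD] at hx
      have hxlt := x.2
      have hm3 : x.1 % 3 = 0 ∨ x.1 % 3 = 1 ∨ x.1 % 3 = 2 := by omega
      rcases hm3 with h0 | h1 | h2
      · refine ⟨⟨x.1 + 1, by omega⟩, (hmemD _).2 (by simp; omega), Or.inl rfl, ?_⟩
        exact le_trans (sdeg_path_le _ _) (sdeg_path_mk_interior (by omega) (by omega)).ge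
      · exact absurd h1 hx
      · refine ⟨⟨x.1 - 1, by omega⟩, (hmemD _).2 (by simp; omega), Or.inr (by simp; omega), ?_⟩
        exact le_trans (sdeg_path_le _ _) (sdeg_path_mk_interior (by omega) (by omega)).ge
    · rw [hD, Set.ncard_coe_finset, Finset.card_image_of_injective _ hinj, Finset.card_univ,
        Fintype.card_fin]
  · intro D hD
    have := path_lower hD
    omega

lemma sdn_path_3k1 {k : ℕ} (hk : 1 ≤ k) : sdn (pathG (3 * k + 1)) = k + 1 := by
  classical
  apply sdn_eq
  · set f : Fin k → Fin (3 * k + 1) := fun i => ⟨3 * i.1 + 1, by have := i.2; omega⟩ with hf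
    have hinj : Function.Injective f := by
      intro i j h
      simp only [hf, Fin.mk.injEq] at h
      exact Fin.ext (by omega)
    set last : Fin (3 * k + 1) := ⟨3 * k, by omega⟩ with hlast
    set DF : Finset (Fin (3 * k + 1)) := insert last ((Finset.univ : Finset (Fin k)).image f)
      with hDF
    set D : Set (Fin (3 * k + 1)) := ↑DF with hD
    have hmemD : ∀ x : Fin (3 * k + 1), x ∈ D ↔ (x.1 % 3 = 1 ∨ x.1 = 3 * k) := by
      intro x
      simp only [hD, hDF, Finset.coe_insert, Set.mem_insert_iff, Finset.coe_image,
        Finset.coe_univ, Set.image_univ, Set.mem_range, hf, hlast, Fin.ext_iff, Fin.val_mk]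
      constructor
      · rintro (h | ⟨i, hi⟩) <;> omega
      · intro h
        rcases h with h | h
        · have hx := x.2
          exact Or.inr ⟨⟨x.1 / 3, by omega⟩, by simp; omega⟩
        · exact Or.inl h
    refine ⟨D, ?_, ?_⟩
    · intro x hx
      rw [hmemD] at hx
      push_neg at hx
      obtain ⟨hx1, hx2⟩ := hx
      have hxlt := x.2
      have hm3 : x.1 % 3 = 0 ∨ x.1 % 3 = 1 ∨ x.1 % 3 = 2 := by omega
      rcases hm3 with h0 | h1 | h2
      · refine ⟨⟨x.1 + 1, by omega⟩, (hmemD _).2 (by simp; omega), Or.inl rfl, ?_⟩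
        exact le_trans (sdeg_path_le _ _) (sdeg_path_mk_interior (by omega) (by omega)).ge
      · exact absurd h1 hx1
      · refine ⟨⟨x.1 - 1, by omega⟩, (hmemD _).2 (by simp; omega), Or.inr (by simp; omega), ?_⟩
        exact le_trans (sdeg_path_le _ _) (sdeg_path_mk_interior (by omega) (by omega)).ge
    · rw [hD, Set.ncard_coe_finset, hDF, Finset.card_insert_of_notMem, 
        Finset.card_image_of_injective _ hinj, Finset.card_univ, Fintype.card_fin]
      simp only [Finset.mem_image]
      push_neg
      intro i _ h
      have h2 : 3 * i.1 + 1 = 3 * k := congrArg Fin.val h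
      have := i.2
      omega
  · intro D hD
    have := path_lower hD
    omega

lemma sdeg_iso {V W : Type*} {G : SimpleGraph V} {H : SimpleGraph W} (e : G ≃g H) (x : V) :
    sdeg H (e x) = sdeg G x := by
  have himg : H.neighborSet (e x) = e '' (G.neighborSet x) := by
    ext y
    simp only [SimpleGraph.mem_neighborSet, Set.mem_image]
    constructor
    · intro h
      refine ⟨e.symm y, ?_, e.apply_symm_apply y⟩
      have := e.symm.map_adj_iff.2 h
      simpa using this
    · rintro ⟨z, hz, rfl⟩
      exact e.map_adj_iff.2 hz
  rw [sdeg, himg, Set.ncard_image_of_injective _ e.injective, sdeg]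

lemma sdn_mem_le {V W : Type*} {G : SimpleGraph V} {H : SimpleGraph W} (e : G ≃g H)
    {D : Set V} (hD : IsStrongDominating G D) :
    IsStrongDominating H (e '' D) ∧ (e '' D).ncard = D.ncard := by
  constructor
  · intro x hx
    have hx' : e.symm x ∉ D := by
      intro h
      exact hx ⟨e.symm x, h, e.apply_symm_apply x⟩
    obtain ⟨y, hyD, hadj, hdeg⟩ := hD _ hx'
    refine ⟨e y, ⟨y, hyD, rfl⟩, ?_, ?_⟩
    · have := e.map_adj_iff.2 hadj
      rwa [e.apply_symm_apply] at this
    · have h1 : sdeg H x = sdeg G (e.symm x) := by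
        conv_lhs => rw [← e.apply_symm_apply x]
        exact sdeg_iso e _
      rw [h1, sdeg_iso e]
      exact hdeg
  · exact Set.ncard_image_of_injective _ e.injective

lemma sdn_iso {V W : Type*} {G : SimpleGraph V} {H : SimpleGraph W} (e : G ≃g H) :
    sdn G = sdn H := by
  unfold sdn
  congr 1
  ext n
  simp only [Set.mem_setOf_eq]
  constructor
  · rintro ⟨D, hD, rfl⟩
    obtain ⟨h1, h2⟩ := sdn_mem_le e hD
    exact ⟨e '' D, h1, h2⟩
  · rintro ⟨D, hD, rfl⟩
    obtain ⟨h1, h2⟩ := sdn_mem_le e.symm hD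
    exact ⟨e.symm '' D, h1, h2⟩

lemma contract_adj_end {k : ℕ} (v : Fin (3 * k + 1)) (hv : v.1 = 0 ∨ v.1 = 3 * k)
    (a b : {x : Fin (3 * k + 1) // x ≠ v}) :
    (contractVtx (pathG (3 * k + 1)) v).Adj a b ↔ (a.1.1 + 1 = b.1.1 ∨ b.1.1 + 1 = a.1.1) := by
  have hane : a.1.1 ≠ v.1 := fun h => a.2 (Fin.ext h)
  have hbne : b.1.1 ≠ v.1 := fun h => b.2 (Fin.ext h)
  constructor
  · rintro ⟨hne, h | ⟨h1, h2⟩⟩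
    · exact h
    · exfalso
      apply hne
      apply Subtype.ext; apply Fin.ext
      rcases path_adj.1 h1 with h1' | h1' <;> rcases path_adj.1 h2 with h2' | h2' <;> omega
  · intro h
    refine ⟨fun hc => ?_, Or.inl h⟩
    · rw [hc] at h
      omega

lemma pendant_end {k : ℕ} (hk : 1 ≤ k) (v : Fin (3 * k + 1))
    (h : sdeg (pathG (3 * k + 1)) v = 1) : v.1 = 0 ∨ v.1 = 3 * k := by
  by_contra hc
  push_neg at hc
  have hlt := v.2
  have := sdeg_path_interior v (by omega) (by omega)
  omega

noncomputable def isoZero {k : ℕ} (v : Fin (3 * k + 1)) (hv : v.1 = 0) :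
    (contractVtx (pathG (3 * k + 1)) v) ≃g pathG (3 * k) where
  toFun x := ⟨x.1.1 - 1, by
    have h1 := x.1.2
    have h2 : x.1.1 ≠ 0 := fun h => x.2 (Fin.ext (by omega))
    omega⟩
  invFun y := ⟨⟨y.1 + 1, by have := y.2; omega⟩, fun h => by
    have : y.1 + 1 = v.1 := congrArg Fin.val h
    omega⟩
  left_inv x := by
    apply Subtype.ext; apply Fin.ext
    have h2 : x.1.1 ≠ 0 := fun h => x.2 (Fin.ext (by omega))
    show x.1.1 - 1 + 1 = x.1.1
    omega
  right_inv y := by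
    apply Fin.ext
    show y.1 + 1 - 1 = y.1
    omega
  map_rel_iff' := by
    intro a b
    have h2 : a.1.1 ≠ 0 := fun h => a.2 (Fin.ext (by omega))
    have h3 : b.1.1 ≠ 0 := fun h => b.2 (Fin.ext (by omega))
    rw [contract_adj_end v (Or.inl hv)]
    show (a.1.1 - 1 + 1 = b.1.1 - 1 ∨ b.1.1 - 1 + 1 = a.1.1 - 1) ↔ _
    omega

noncomputable def isoLast {k : ℕ} (v : Fin (3 * k + 1)) (hv : v.1 = 3 * k) :
    (contractVtx (pathG (3 * k + 1)) v) ≃g pathG (3 * k) where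
  toFun x := ⟨x.1.1, by
    have h1 := x.1.2
    have h2 : x.1.1 ≠ 3 * k := fun h => x.2 (Fin.ext (by omega))
    omega⟩
  invFun y := ⟨⟨y.1, by omega⟩, fun h => by
    have : y.1 = v.1 := congrArg Fin.val h
    have := y.2
    omega⟩
  left_inv x := by apply Subtype.ext; apply Fin.ext; rfl
  right_inv y := by apply Fin.ext; rfl
  map_rel_iff' := by
    intro a b
    rw [contract_adj_end v (Or.inr hv)]
    exact Iff.rfl

/-- for k ≥ 1, contracting a pendant vertex of the path P_{3k+1} decreases
the strong domination number by exactly one; equivalently γst(P_{3k}) = γst(P_{3k+1}) − 1. -/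
theorem sdn_path_pendant_contract (k : ℕ) (hk : 1 ≤ k) :
    (∀ v : Fin (3 * k + 1), sdeg (pathG (3 * k + 1)) v = 1 →
      (sdn (contractVtx (pathG (3 * k + 1)) v) : ℤ) = (sdn (pathG (3 * k + 1)) : ℤ) - 1) ∧
    (sdn (pathG (3 * k)) : ℤ) = (sdn (pathG (3 * k + 1)) : ℤ) - 1 := by
  have h3k := sdn_path_3k hk
  have h3k1 := sdn_path_3k1 hk
  constructor
  · intro v hv
    have hcontract : sdn (contractVtx (pathG (3 * k + 1)) v) = sdn (pathG (3 * k)) := by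
      rcases pendant_end hk v hv with h | h
      · exact sdn_iso (isoZero v h)
      · exact sdn_iso (isoLast v h)
    rw [hcontract, h3k, h3k1]
    push_cast
    ring
  · rw [h3k, h3k1]
    push_cast
    ring
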